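/- If a theory T has property SOP₁′ (i.e., some formula φ(x̄,ȳ) has SOP₁′), then T has SOP₁. -/

import Mathlib

open FirstOrder FirstOrder.Language

universe u v w

namespace Sh692

variable {L : FirstOrder.Language.{u, v}}

/-- The restriction `η↾k` of an infinite binary sequence, as a finite binary sequence. -/
def restr (η : ℕ → Fin 2) (k : ℕ) : List (Fin 2) := List.ofFn fun i : Fin k => η i

/-- `T` has SOP₁′: some formula `φ(x̄,ȳ)` with tuples `ā_η`, `η ∈ 2^{<ω}`, in a (monster)
model of `T` satisfies (a) for every `η ∈ 2^ω`, `{φ(x̄, ā_{η↾n})^{η(n)} : n < ω}` is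
consistent (finitely satisfiable), where `φ¹ = φ`, `φ⁰ = ¬φ`; and (b) if `ν⌢⟨0⟩ ⊴ η`
then `{φ(x̄, ā_η), φ(x̄, ā_ν)}` is inconsistent. -/
def HasSOP1' (T : L.Theory) : Prop :=
  ∃ (p m : ℕ) (φ : L.Formula (Fin p ⊕ Fin m)) (M : Theory.ModelType.{u, v, w} T)
    (a : List (Fin 2) → Fin m → M),
    (∀ η : ℕ → Fin 2, ∀ N : ℕ, ∃ x : Fin p → M, ∀ k < N,
      (if η k = (1 : Fin 2) then φ.Realize (Sum.elim x (a (restr η k)))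
        else ¬ φ.Realize (Sum.elim x (a (restr η k))))) ∧
    (∀ ν η : List (Fin 2), ν ++ [(0 : Fin 2)] <+: η →
      ¬ ∃ x : Fin p → M, φ.Realize (Sum.elim x (a η)) ∧ φ.Realize (Sum.elim x (a ν)))

/-- `T` has SOP₁: there are a formula `ψ(x̄,z̄)` and tuples `b̄_η`, `η ∈ 2^{<ω}`, in a
(monster) model of `T` with (a) for every `ρ ∈ 2^ω`, `{ψ(x̄, b̄_{ρ↾n}) : n < ω}` is
consistent (finitely satisfiable), and (b) if `ν⌢⟨0⟩ ⊴ η` then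
`{ψ(x̄, b̄_η), ψ(x̄, b̄_{ν⌢⟨1⟩})}` is inconsistent. -/
def HasSOP1 (T : L.Theory) : Prop :=
  ∃ (p m : ℕ) (ψ : L.Formula (Fin p ⊕ Fin m)) (M : Theory.ModelType.{u, v, w} T)
    (b : List (Fin 2) → Fin m → M),
    (∀ η : ℕ → Fin 2, ∀ N : ℕ, ∃ x : Fin p → M,
      ∀ k < N, ψ.Realize (Sum.elim x (b (restr η k)))) ∧
    (∀ ν η : List (Fin 2), ν ++ [(0 : Fin 2)] <+: η →
      ¬ ∃ x : Fin p → M,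
        ψ.Realize (Sum.elim x (b η)) ∧ ψ.Realize (Sum.elim x (b (ν ++ [(1 : Fin 2)]))))

def g2 (i : Fin 2) : List (Fin 2) := if i = 1 then [1] else [1, 0]

def hmap (η : List (Fin 2)) : List (Fin 2) := (η.map g2).flatten

lemma hmap_append (ν τ : List (Fin 2)) : hmap (ν ++ τ) = hmap ν ++ hmap τ := by
  simp [hmap]

lemma hmap_prefix {ν η : List (Fin 2)} (h : ν <+: η) : hmap ν <+: hmap η := by
  obtain ⟨t, rfl⟩ := h; exact ⟨hmap t, (hmap_append ν t).symm⟩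

lemma restr_succ (ρ : ℕ → Fin 2) (k : ℕ) : restr ρ (k+1) = restr ρ k ++ [ρ k] := by
  rw [restr, List.ofFn_succ', List.concat_eq_append]
  simp [restr]

lemma restr_prefix (ρ : ℕ → Fin 2) {j k : ℕ} (h : j ≤ k) : restr ρ j <+: restr ρ k := by
  induction k with
  | zero => simp_all
  | succ n ih =>
    rcases Nat.lt_or_ge j (n+1) with h' | h'
    · exact (ih (Nat.lt_succ_iff.mp h')).trans ⟨[ρ n], (restr_succ ρ n).symm⟩
    · have : j = n+1 := le_antisymm h h'
      subst this; exact List.prefix_rfl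

lemma one_le_g2 (i : Fin 2) : 1 ≤ (g2 i).length := by fin_cases i <;> simp [g2]

lemma hmap_restr_succ (ρ : ℕ → Fin 2) (k : ℕ) :
    hmap (restr ρ (k+1)) = hmap (restr ρ k) ++ g2 (ρ k) := by
  rw [restr_succ, hmap_append]; simp [hmap]

lemma le_len (ρ : ℕ → Fin 2) (k : ℕ) : k ≤ (hmap (restr ρ k)).length := by
  induction k with
  | zero => simp
  | succ n ih =>
    rw [hmap_restr_succ, List.length_append]
    have := one_le_g2 (ρ n); omega

lemma len_mono (ρ : ℕ → Fin 2) {j k : ℕ} (h : j < k) :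
    (hmap (restr ρ j)).length < (hmap (restr ρ k)).length := by
  have h1 : (hmap (restr ρ (j+1))).length ≤ (hmap (restr ρ k)).length :=
    (hmap_prefix (restr_prefix ρ h)).length_le
  rw [hmap_restr_succ, List.length_append] at h1
  have := one_le_g2 (ρ j); omega

lemma prefix_getD {l₁ l₂ : List (Fin 2)} (h : l₁ <+: l₂) {n : ℕ} (hn : n < l₁.length) :
    l₁.getD n 0 = l₂.getD n 0 := by
  obtain ⟨t, rfl⟩ := h
  rw [List.getD_eq_getElem _ _ hn,
    List.getD_eq_getElem _ _ (lt_of_lt_of_le hn (by simp)),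
    List.getElem_append_left hn]

lemma agree (ρ : ℕ → Fin 2) {n k : ℕ} (hn : n < (hmap (restr ρ k)).length) :
    (hmap (restr ρ (n+1))).getD n 0 = (hmap (restr ρ k)).getD n 0 := by
  rcases le_total (n+1) k with h | h
  · exact prefix_getD (hmap_prefix (restr_prefix ρ h))
      (lt_of_lt_of_le (Nat.lt_succ_self n) (le_len ρ (n+1)))
  · exact (prefix_getD (hmap_prefix (restr_prefix ρ h)) hn).symm

-- the branch
noncomputable def σb (ρ : ℕ → Fin 2) (n : ℕ) : Fin 2 := (hmap (restr ρ (n+1))).getD n 0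

lemma restr_σb (ρ : ℕ → Fin 2) (k : ℕ) :
    restr (σb ρ) (hmap (restr ρ k)).length = hmap (restr ρ k) := by
  apply List.ext_getElem (by simp [restr])
  intro n h1 h2
  have hn : n < (hmap (restr ρ k)).length := by simpa [restr] using h1
  simp only [restr, List.getElem_ofFn]
  show σb ρ n = _
  rw [σb, agree ρ hn, List.getD_eq_getElem _ _ hn]
  rfl

lemma g2_getD (i : Fin 2) : (g2 i).getD 0 0 = 1 := by fin_cases i <;> rfl

lemma σb_at (ρ : ℕ → Fin 2) (k : ℕ) : σb ρ (hmap (restr ρ k)).length = 1 := by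
  set n := (hmap (restr ρ k)).length with hn
  have hk1 : k + 1 ≤ n + 1 := by have := le_len ρ k; omega
  have hlt : n < (hmap (restr ρ (k+1))).length := len_mono ρ (Nat.lt_succ_self k)
  rw [σb, ← prefix_getD (hmap_prefix (restr_prefix ρ hk1)) hlt]
  rw [hmap_restr_succ, List.getD_eq_getElem _ _ (by simpa [hmap_restr_succ] using hlt),
    List.getElem_append_right (le_refl n)]
  simp only [← hn, Nat.sub_self]
  rw [← List.getD_eq_getElem _ (0 : Fin 2)]
  exact g2_getD (ρ k)

/-- If a theory `T` has property SOP₁′, then `T` has SOP₁. -/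
theorem hasSOP1_of_hasSOP1' (T : L.Theory) (hT : T.IsComplete) :
    HasSOP1'.{u, v, w} T → HasSOP1.{u, v, w} T := by
  rintro ⟨p, m, φ, M, a, ha, hb⟩
  refine ⟨p, m, φ, M, fun η => a (hmap η), ?_, ?_⟩
  · intro ρ N
    obtain ⟨x, hx⟩ := ha (σb ρ) ((hmap (restr ρ N)).length)
    refine ⟨x, fun k hk => ?_⟩
    have h3 : (hmap (restr ρ k)).length < (hmap (restr ρ N)).length := len_mono ρ hk
    have := hx _ h3
    rw [σb_at ρ k, restr_σb ρ k] at this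
    simpa using this
  · rintro ν η ⟨τ, rfl⟩ ⟨x, hx1, hx2⟩
    refine hb (hmap ν ++ [1]) (hmap (ν ++ [0] ++ τ)) ⟨hmap τ, ?_⟩ ⟨x, hx1, ?_⟩
    · rw [hmap_append, hmap_append]
      show _ = hmap ν ++ ([1] ++ [0] : List (Fin 2)) ++ hmap τ
      simp [hmap, g2]
    · have : hmap (ν ++ [1]) = hmap ν ++ [1] := by
        rw [hmap_append]; rfl
      rw [← this]; exact hx2

end Sh692
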